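/- For every n ≥ 1, the n-th symmetric product SP^n([0,1]) of the closed unit interval [0,1] ⊆ ℝ is homeomorphic to the standard n-simplex, i.e. to stdSimplex ℝ (Fin (n+1)) = { x : Fin (n+1) → ℝ | (∀ i, 0 ≤ x i) ∧ ∑ i, x i = 1 } with its subspace topology. A homeomorphism is induced by sending an unordered n-tuple 0 ≤ x₁ ≤ ... ≤ xₙ ≤ 1 (its sorted representative) to the vector of consecutive differences (x₁, x₂ − x₁, ..., xₙ − x_{n−1}, 1 − xₙ). -/

import Mathlib

/-- The setoid on `Fin n → X` whose classes are orbits of the permutation action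
of `Equiv.Perm (Fin n)`. -/
def SPSetoid (n : ℕ) (X : Type*) : Setoid (Fin n → X) where
  r f g := ∃ σ : Equiv.Perm (Fin n), f ∘ σ = g
  iseqv := by
    constructor
    · exact fun f => ⟨Equiv.refl _, rfl⟩
    · rintro f g ⟨σ, rfl⟩
      exact ⟨σ.symm, by funext i; simp⟩
    · rintro f g h ⟨σ, rfl⟩ ⟨τ, rfl⟩
      exact ⟨τ.trans σ, by funext i; simp⟩

/-- The `n`-th symmetric product `SP^n(X) = X^n / S_n`, with the quotient topology. -/
def SP (n : ℕ) (X : Type*) [TopologicalSpace X] : Type _ :=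
  Quotient (SPSetoid n X)

instance (n : ℕ) (X : Type*) [TopologicalSpace X] : TopologicalSpace (SP n X) :=
  inferInstanceAs (TopologicalSpace (Quotient (SPSetoid n X)))


noncomputable section
namespace SPAux
open Finset

variable {n : ℕ}

/-- partial sums of `y` below `m` -/
def P (n : ℕ) (y : Fin (n+1) → ℝ) (m : ℕ) : ℝ :=
  ∑ i : Fin (n+1), if (i : ℕ) < m then y i else 0

lemma P_zero (y : Fin (n+1) → ℝ) : P n y 0 = 0 := by simp [P]

lemma P_succ (y : Fin (n+1) → ℝ) (m : ℕ) (h : m < n+1) :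
    P n y (m+1) = P n y m + y ⟨m, h⟩ := by
  have key : ∀ i : Fin (n+1), (if (i:ℕ) < m+1 then y i else 0)
      = (if (i:ℕ) < m then y i else 0) + (if i = ⟨m,h⟩ then y i else 0) := by
    intro i
    rcases eq_or_ne i ⟨m,h⟩ with rfl | hne
    · simp
    · have hm : (i:ℕ) ≠ m := fun hh => hne (Fin.ext hh)
      by_cases h2 : (i:ℕ) < m
      · rw [if_pos (by omega), if_pos h2, if_neg hne, add_zero]
      · rw [if_neg (by omega), if_neg h2, if_neg hne, add_zero]
  unfold P
  rw [Finset.sum_congr rfl fun i _ => key i, Finset.sum_add_distrib,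
    Finset.sum_ite_eq' Finset.univ (⟨m,h⟩ : Fin (n+1)) y]
  simp

lemma P_top (y : Fin (n+1) → ℝ) (m : ℕ) (h : n+1 ≤ m) : P n y m = ∑ i, y i :=
  Finset.sum_congr rfl fun i _ => if_pos (lt_of_lt_of_le i.isLt h)

lemma P_nonneg {y : Fin (n+1) → ℝ} (hy : ∀ i, 0 ≤ y i) (m : ℕ) : 0 ≤ P n y m :=
  Finset.sum_nonneg fun i _ => by by_cases h : (i:ℕ) < m <;> simp [h, hy i]

lemma P_mono {y : Fin (n+1) → ℝ} (hy : ∀ i, 0 ≤ y i) {m m' : ℕ} (h : m ≤ m') :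
    P n y m ≤ P n y m' := by
  apply Finset.sum_le_sum
  intro i _
  by_cases h1 : (i:ℕ) < m
  · rw [if_pos h1, if_pos (by omega)]
  · rw [if_neg h1]; by_cases h2 : (i:ℕ) < m' <;> simp [h2, hy i]

lemma P_le_sum {y : Fin (n+1) → ℝ} (hy : ∀ i, 0 ≤ y i) (m : ℕ) : P n y m ≤ ∑ i, y i := by
  rw [← P_top y (n+1) le_rfl]
  by_cases h : m ≤ n+1
  · exact P_mono hy h
  · rw [P_top y m (by omega)]; exact le_of_eq (P_top y (n+1) le_rfl).symm
def cf (f : Fin n → Set.Icc (0:ℝ) 1) : Fin (n+2) → ℝ :=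
  Fin.cons 0 (Fin.snoc (fun j => (f j : ℝ)) 1)

lemma cf_cast (f : Fin n → Set.Icc (0:ℝ) 1) (m : ℕ) (h : m < n+2) :
    cf f ⟨m, h⟩ = if m = 0 then 0 else if hm : m - 1 < n then (f ⟨m-1, hm⟩ : ℝ) else 1 := by
  rcases m with _ | k
  · have : (⟨0, h⟩ : Fin (n+2)) = 0 := rfl
    rw [this]
    simp [cf]
  · have hs : (⟨k+1, h⟩ : Fin (n+2)) = Fin.succ ⟨k, by omega⟩ := rfl
    rw [hs, cf, Fin.cons_succ]
    by_cases hk : k < n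
    · have : (⟨k, by omega⟩ : Fin (n+1)) = Fin.castSucc ⟨k, hk⟩ := rfl
      rw [this, Fin.snoc_castSucc]
      simp [hk]
    · have hkn : k = n := by omega
      subst hkn
      have : (⟨k, by omega⟩ : Fin (k+1)) = Fin.last k := rfl
      rw [this, Fin.snoc_last]
      simp

def Dv (f : Fin n → Set.Icc (0:ℝ) 1) : Fin (n+1) → ℝ :=
  fun i => cf f i.succ - cf f i.castSucc

lemma Dv_cast (f : Fin n → Set.Icc (0:ℝ) 1) (i : Fin (n+1)) :
    Dv f i = cf f ⟨i.1+1, by omega⟩ - cf f ⟨i.1, by omega⟩ := rfl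

lemma P_Dv (f : Fin n → Set.Icc (0:ℝ) 1) :
    ∀ m, (h : m ≤ n+1) → P n (Dv f) m = cf f ⟨m, by omega⟩ := by
  intro m
  induction m with
  | zero =>
    intro h
    rw [P_zero, cf_cast]
    simp
  | succ k ih =>
    intro h
    rw [P_succ _ k (by omega), ih (by omega), Dv_cast]
    ring

lemma Dv_mem (f : Fin n → Set.Icc (0:ℝ) 1) (hf : Monotone fun i => (f i : ℝ)) :
    Dv f ∈ stdSimplex ℝ (Fin (n+1)) := by
  constructor
  · intro i
    rw [Dv_cast, cf_cast, cf_cast, sub_nonneg]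
    by_cases h1 : i.1 = 0
    · rw [if_pos h1, if_neg (show ¬(i.1+1 = 0) by omega)]
      split_ifs with h2
      · exact (f _).2.1
      · exact zero_le_one
    · rw [if_neg h1, if_neg (show ¬(i.1+1 = 0) by omega)]
      by_cases h2 : i.1 < n
      · rw [dif_pos (show i.1 - 1 < n by omega), dif_pos (show i.1 + 1 - 1 < n by omega)]
        exact hf (show (⟨i.1-1, by omega⟩ : Fin n) ≤ ⟨i.1+1-1, by omega⟩ from by
          rw [Fin.mk_le_mk]; omega)
      · rw [dif_neg (show ¬(i.1 + 1 - 1 < n) by omega)]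
        split_ifs with h3
        · exact (f _).2.2
        · exact le_rfl
  · rw [← P_top (Dv f) (n+1) le_rfl, P_Dv f (n+1) le_rfl, cf_cast]
    simp

def gfun (y : stdSimplex ℝ (Fin (n+1))) : Fin n → Set.Icc (0:ℝ) 1 :=
  fun k => ⟨P n y.1 (k.1+1), P_nonneg y.2.1 _,
    by rw [← y.2.2]; exact P_le_sum y.2.1 _⟩

lemma gfun_coe (y : stdSimplex ℝ (Fin (n+1))) (k : Fin n) :
    (gfun y k : ℝ) = P n y.1 (k.1+1) := rfl

lemma gfun_mono (y : stdSimplex ℝ (Fin (n+1))) :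
    Monotone fun k => (gfun y k : ℝ) := fun a b hab =>
  P_mono y.2.1 (by have := Fin.le_iff_val_le_val.mp hab; omega)

lemma gfun_Dv (f : Fin n → Set.Icc (0:ℝ) 1) (h : Dv f ∈ stdSimplex ℝ (Fin (n+1))) :
    gfun ⟨Dv f, h⟩ = f := by
  funext k
  apply Subtype.ext
  rw [gfun_coe]
  show P n (Dv f) (k.1+1) = _
  rw [P_Dv f (k.1+1) (by omega), cf_cast]
  rw [if_neg (by omega), dif_pos (show k.1+1-1 < n by omega)]
  congr 1

lemma P_inj (y y' : stdSimplex ℝ (Fin (n+1)))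
    (h : ∀ k : Fin n, P n y.1 (k.1+1) = P n y'.1 (k.1+1)) : y = y' := by
  have key : ∀ m, m ≤ n+1 → P n y.1 m = P n y'.1 m := by
    intro m hm
    rcases m with _ | k
    · rw [P_zero, P_zero]
    · by_cases hk : k < n
      · exact h ⟨k, hk⟩
      · have : k = n := by omega
        subst this
        rw [P_top _ _ le_rfl, P_top _ _ le_rfl, y.2.2, y'.2.2]
  apply Subtype.ext
  funext i
  have h1 := P_succ y.1 i.1 i.isLt
  have h2 := P_succ y'.1 i.1 i.isLt
  have e1 : (⟨i.1, i.isLt⟩ : Fin (n+1)) = i := Fin.eta i i.isLt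
  rw [e1] at h1 h2
  have k1 := key (i.1+1) (by omega)
  have k2 := key i.1 (by omega)
  linarith

lemma cont_gfun : Continuous (gfun (n := n)) := by
  apply continuous_pi
  intro k
  apply Continuous.subtype_mk
  apply continuous_finset_sum
  intro i _
  by_cases h : (i:ℕ) < k.1+1
  · simpa [h, Function.comp_def] using (continuous_apply i).comp continuous_subtype_val
  · simpa [h] using (continuous_const : Continuous fun _ : stdSimplex ℝ (Fin (n+1)) => (0:ℝ))

attribute [local instance] arrowAction

local instance {X : Type*} [TopologicalSpace X] :
    ContinuousConstSMul (Equiv.Perm (Fin n)) (Fin n → X) :=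
  ⟨fun σ => continuous_pi fun i => continuous_apply (σ⁻¹ • i)⟩

lemma setoid_eq (X : Type*) :
    SPSetoid n X = MulAction.orbitRel (Equiv.Perm (Fin n)) (Fin n → X) := by
  apply Setoid.ext
  intro f g
  constructor
  · rintro ⟨σ, rfl⟩
    refine MulAction.orbitRel_apply.mpr ⟨σ, funext fun a => ?_⟩
    show (f ∘ σ) (σ⁻¹ • a) = f a
    simp [Equiv.Perm.smul_def]
  · intro h
    obtain ⟨τ, hτ⟩ := MulAction.orbitRel_apply.mp h
    refine ⟨τ, funext fun a => ?_⟩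
    have h2 : g (τ⁻¹ • τ a) = f (τ a) := congrFun hτ (τ a)
    simpa [Equiv.Perm.smul_def] using h2.symm

lemma t2SP : T2Space (SP n (Set.Icc (0:ℝ) 1)) := by
  show T2Space (Quotient (SPSetoid n (Set.Icc (0:ℝ) 1)))
  rw [setoid_eq]
  infer_instance

end SPAux
end


/-- `SP^n([0,1])` is homeomorphic to the standard `n`-simplex, via the map sending
the sorted representative `0 ≤ x₁ ≤ … ≤ xₙ ≤ 1` of an orbit to the vector of
consecutive differences `(x₁, x₂ − x₁, …, xₙ − x_{n−1}, 1 − xₙ)`. -/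
theorem SP_Icc_homeomorph_stdSimplex (n : ℕ) (hn : 1 ≤ n) :
    ∃ h : SP n (Set.Icc (0 : ℝ) 1) ≃ₜ stdSimplex ℝ (Fin (n + 1)),
      ∀ f : Fin n → Set.Icc (0 : ℝ) 1, (Monotone fun i => (f i : ℝ)) →
        (h (Quotient.mk (SPSetoid n (Set.Icc (0 : ℝ) 1)) f) : Fin (n + 1) → ℝ) =
          fun i : Fin (n + 1) =>
            (Fin.cons 0 (Fin.snoc (fun j => (f j : ℝ)) 1) : Fin (n + 2) → ℝ) i.succ -
            (Fin.cons 0 (Fin.snoc (fun j => (f j : ℝ)) 1) : Fin (n + 2) → ℝ) i.castSucc := by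
  classical
  letI : T2Space (SP n (Set.Icc (0 : ℝ) 1)) := SPAux.t2SP
  haveI : CompactSpace (stdSimplex ℝ (Fin (n+1))) :=
    isCompact_iff_compactSpace.mp (isCompact_stdSimplex _ _)
  set X := Set.Icc (0:ℝ) 1 with hX
  let gmap : stdSimplex ℝ (Fin (n+1)) → SP n X :=
    fun y => Quotient.mk (SPSetoid n X) (SPAux.gfun y)
  have hcont : Continuous gmap := Continuous.comp continuous_quot_mk SPAux.cont_gfun
  have hinj : Function.Injective gmap := by
    intro y y' h
    obtain ⟨σ, hσ⟩ := Quotient.exact h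
    have h1 : (fun k => (SPAux.gfun y k : ℝ)) ∘ σ = fun k => (SPAux.gfun y' k : ℝ) := by
      funext k; exact congrArg Subtype.val (congrFun hσ k)
    have h2 : Monotone ((fun k => (SPAux.gfun y k : ℝ)) ∘ σ) := h1 ▸ SPAux.gfun_mono y'
    have h3 : Monotone ((fun k => (SPAux.gfun y k : ℝ)) ∘ ⇑(1 : Equiv.Perm (Fin n))) := by
      simpa using SPAux.gfun_mono y
    have h4 := Tuple.unique_monotone h2 h3
    apply SPAux.P_inj
    intro k
    have h5 := congrFun (h1.symm.trans h4) k
    simpa [SPAux.gfun_coe] using h5.symm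
  have hsurj : Function.Surjective gmap := by
    intro q
    obtain ⟨f, rfl⟩ := Quotient.exists_rep q
    let σ := Tuple.sort f
    have hm : Monotone (f ∘ σ) := Tuple.monotone_sort f
    have hm' : Monotone fun i => ((f ∘ σ) i : ℝ) := fun a b hab =>
      Subtype.coe_le_coe.mpr (hm hab)
    refine ⟨⟨SPAux.Dv (f ∘ σ), SPAux.Dv_mem _ hm'⟩, ?_⟩
    show Quotient.mk _ (SPAux.gfun _) = _
    rw [SPAux.gfun_Dv (f ∘ σ) _]
    have hr : (SPSetoid n X).r f (f ∘ ⇑σ) := ⟨σ, rfl⟩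
    exact (Quotient.sound hr).symm
  let E := Equiv.ofBijective gmap ⟨hinj, hsurj⟩
  have hE : Continuous E := hcont
  let H := hE.homeoOfEquivCompactToT2
  refine ⟨H.symm, ?_⟩
  intro f hf
  have hmem := SPAux.Dv_mem f hf
  have hH : H ⟨SPAux.Dv f, hmem⟩ = Quotient.mk (SPSetoid n X) f := by
    show Quotient.mk _ (SPAux.gfun _) = _
    rw [SPAux.gfun_Dv f hmem]
  have hs : H.symm (Quotient.mk (SPSetoid n X) f) = ⟨SPAux.Dv f, hmem⟩ :=
    H.symm_apply_eq.mpr hH.symm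
  rw [hs]
  rfl
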